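/- Let K = Q(√D) with D squarefree, D ∉ {0,1}, and n ≥ 1. The ring Γ_K^n of generalized polynomials in n variables over K taking values in Q equals Q[z₁ + τ(z₁), √D(z₁ − τ(z₁)), ..., zₙ + τ(zₙ), √D(zₙ − τ(zₙ))]. -/

import Mathlib

open MvPolynomial

lemma aux_not_sq (D : ℤ) (hsq : Squarefree D) (hD1 : D ≠ 1) (q : ℚ) :
    q ^ 2 ≠ (D : ℚ) := by
  intro h
  have hden : q.den ^ 2 = 1 := by
    have : (q ^ 2).den = ((D : ℚ)).den := by rw [h]
    simpa [Rat.den_pow] using this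
  have hden1 : q.den = 1 := by nlinarith [q.den_pos]
  have hq : (q.num : ℚ) = q := Rat.coe_int_num_of_den_eq_one hden1
  have hZ : q.num ^ 2 = D := by
    have : ((q.num ^ 2 : ℤ) : ℚ) = ((D : ℤ) : ℚ) := by push_cast [hq]; exact h
    exact_mod_cast this
  have hsq' : Squarefree (q.num ^ 2) := hZ ▸ hsq
  have hu : IsUnit q.num := hsq' q.num (by rw [sq])
  rcases Int.isUnit_iff.mp hu with h1 | h1 <;> rw [h1] at hZ <;> simp at hZ <;> omega

lemma aux_decomp {K : Type*} [CommRing K] [Algebra ℚ K] (sd : K)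
    (hgen : ∀ x : K, ∃ a b : ℚ, x = algebraMap ℚ K a + algebraMap ℚ K b * sd)
    {σ : Type*} (h : MvPolynomial σ K) :
    ∃ h₀ h₁ : MvPolynomial σ ℚ,
      h = map (algebraMap ℚ K) h₀ + C sd * map (algebraMap ℚ K) h₁ := by
  induction h using MvPolynomial.induction_on with
  | C c =>
    obtain ⟨a, b, rfl⟩ := hgen c
    refine ⟨C a, C b, ?_⟩
    rw [MvPolynomial.map_C, MvPolynomial.map_C, MvPolynomial.C_add, MvPolynomial.C_mul]
    ring
  | add p q hp hq =>
    obtain ⟨p₀, p₁, rfl⟩ := hp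
    obtain ⟨q₀, q₁, rfl⟩ := hq
    refine ⟨p₀ + q₀, p₁ + q₁, ?_⟩
    simp only [map_add]
    ring
  | mul_X p j hp =>
    obtain ⟨p₀, p₁, rfl⟩ := hp
    refine ⟨p₀ * X j, p₁ * X j, ?_⟩
    simp only [map_mul, MvPolynomial.map_X]
    ring

lemma aux_eval_map {K : Type*} [CommSemiring K] [Algebra ℚ K] {σ : Type*}
    (r : σ → ℚ) (p : MvPolynomial σ ℚ) :
    eval (fun v => algebraMap ℚ K (r v)) (map (algebraMap ℚ K) p)
      = algebraMap ℚ K (eval r p) := by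
  induction p using MvPolynomial.induction_on with
  | C c => rw [MvPolynomial.map_C, eval_C, eval_C]
  | add p q hp hq => simp only [map_add, hp, hq]
  | mul_X p j hp => simp only [map_mul, MvPolynomial.map_X, hp, MvPolynomial.eval_X]

lemma aux_eval_aevalK {K : Type*} [CommSemiring K] {σ τ : Type*}
    (x : τ → K) (F : σ → MvPolynomial τ K) (h : MvPolynomial σ K) :
    eval x (aeval F h) = eval (fun v => eval x (F v)) h := by
  induction h using MvPolynomial.induction_on with
  | C c => simp only [MvPolynomial.aeval_C, MvPolynomial.algebraMap_eq, eval_C]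
  | add p q hp hq => simp only [map_add, hp, hq]
  | mul_X p j hp => simp only [map_mul, MvPolynomial.aeval_X, hp, MvPolynomial.eval_X]

lemma aux_eval_aevalQ {K : Type*} [CommSemiring K] [Algebra ℚ K] {σ τ : Type*}
    (x : τ → K) (F : σ → MvPolynomial τ K) (h : MvPolynomial σ ℚ) :
    eval x (aeval F h) = aeval (fun v => eval x (F v)) h := by
  induction h using MvPolynomial.induction_on with
  | C c =>
    simp only [MvPolynomial.aeval_C, MvPolynomial.algebraMap_apply,
      MvPolynomial.algebraMap_eq, eval_C]
  | add p q hp hq => simp only [map_add, hp, hq]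
  | mul_X p j hp => simp only [map_mul, MvPolynomial.aeval_X, hp, MvPolynomial.eval_X]

theorem stmt_3 (D : ℤ) (hsq : Squarefree D) (hD0 : D ≠ 0) (hD1 : D ≠ 1)
    (K : Type*) [Field K] [Algebra ℚ K] (sd : K) (hsd : sd ^ 2 = (D : K))
    (hgen : ∀ x : K, ∃ a b : ℚ, x = algebraMap ℚ K a + algebraMap ℚ K b * sd)
    (τ : K →ₐ[ℚ] K) (hτ : τ sd = -sd)
    (n : ℕ) (hn : 1 ≤ n) :
    ∀ g : MvPolynomial (Fin n × Bool) K,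
      (∀ a : Fin n → K,
        MvPolynomial.eval (fun p => if p.2 then τ (a p.1) else a p.1) g
          ∈ (algebraMap ℚ K).range)
      ↔ g ∈ Algebra.adjoin ℚ
          {p : MvPolynomial (Fin n × Bool) K | ∃ i : Fin n,
            p = MvPolynomial.X (i, false) + MvPolynomial.X (i, true) ∨
            p = MvPolynomial.C sd *
              (MvPolynomial.X (i, false) - MvPolynomial.X (i, true))} := by
  intro g
  haveI : CharZero K := charZero_of_injective_algebraMap (algebraMap ℚ K).injective
  have hinj : Function.Injective (algebraMap ℚ K) := (algebraMap ℚ K).injective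
  have hsd0 : sd ≠ 0 := by
    intro h
    rw [h] at hsd
    exact hD0 (by exact_mod_cast hsd.symm)
  have hindep : ∀ a b : ℚ, algebraMap ℚ K a + algebraMap ℚ K b * sd = 0 →
      a = 0 ∧ b = 0 := by
    intro a b hab
    by_cases hb : b = 0
    · refine ⟨hinj ?_, hb⟩
      subst hb
      simpa using hab
    · exfalso
      have hb' : algebraMap ℚ K b ≠ 0 := fun h => hb (hinj (by simpa using h))
      have hDD : algebraMap ℚ K ((a/b)^2) = algebraMap ℚ K ((D : ℚ)) := by
        rw [map_pow, map_div₀, div_pow, map_intCast, ← hsd,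
          div_eq_iff (pow_ne_zero 2 hb')]
        linear_combination (algebraMap ℚ K a - algebraMap ℚ K b * sd) * hab
      exact aux_not_sq D hsq hD1 (a/b) (hinj hDD)
  have hτx : ∀ p q : ℚ, τ (algebraMap ℚ K p + algebraMap ℚ K q * sd)
      = algebraMap ℚ K p - algebraMap ℚ K q * sd := by
    intro p q
    rw [map_add, map_mul, hτ, AlgHom.commutes, AlgHom.commutes]
    ring
  have hval1 : ∀ p q : ℚ,
      (algebraMap ℚ K p + algebraMap ℚ K q * sd)
        + τ (algebraMap ℚ K p + algebraMap ℚ K q * sd) = algebraMap ℚ K (2*p) := by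
    intro p q
    rw [hτx, map_mul, map_ofNat]
    ring
  have hval2 : ∀ p q : ℚ,
      sd * ((algebraMap ℚ K p + algebraMap ℚ K q * sd)
        - τ (algebraMap ℚ K p + algebraMap ℚ K q * sd))
      = algebraMap ℚ K (2*q*(D:ℚ)) := by
    intro p q
    rw [hτx, map_mul, map_mul, map_ofNat, map_intCast]
    linear_combination (2 * algebraMap ℚ K q) * hsd
  set F : Fin n × Bool → MvPolynomial (Fin n × Bool) K := fun v =>
    if v.2 then MvPolynomial.C sd * (MvPolynomial.X (v.1, false) - MvPolynomial.X (v.1, true))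
    else MvPolynomial.X (v.1, false) + MvPolynomial.X (v.1, true) with hF
  have hset : {p : MvPolynomial (Fin n × Bool) K | ∃ i : Fin n,
      p = MvPolynomial.X (i, false) + MvPolynomial.X (i, true) ∨
      p = MvPolynomial.C sd * (MvPolynomial.X (i, false) - MvPolynomial.X (i, true))}
      = Set.range F := by
    ext p
    simp only [Set.mem_setOf_eq, Set.mem_range]
    constructor
    · rintro ⟨i, h | h⟩
      · exact ⟨(i, false), by simp [hF, h]⟩
      · exact ⟨(i, true), by simp [hF, h]⟩
    · rintro ⟨⟨i, b⟩, rfl⟩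
      cases b
      · exact ⟨i, Or.inl (by simp [hF])⟩
      · exact ⟨i, Or.inr (by simp [hF])⟩
  rw [hset, Algebra.adjoin_range_eq_range_aeval, AlgHom.mem_range]
  constructor
  · intro hvg
    set G : Fin n × Bool → MvPolynomial (Fin n × Bool) K := fun v =>
      if v.2 then MvPolynomial.C (2⁻¹:K) * (MvPolynomial.X (v.1, false)
          - MvPolynomial.C sd⁻¹ * MvPolynomial.X (v.1, true))
      else MvPolynomial.C (2⁻¹:K) * (MvPolynomial.X (v.1, false)
          + MvPolynomial.C sd⁻¹ * MvPolynomial.X (v.1, true)) with hG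
    have h1 : (MvPolynomial.C sd⁻¹ : MvPolynomial (Fin n × Bool) K) * MvPolynomial.C sd = 1 := by
      rw [← MvPolynomial.C_mul, inv_mul_cancel₀ hsd0, MvPolynomial.C_1]
    have h2 : (MvPolynomial.C (2⁻¹:K) : MvPolynomial (Fin n × Bool) K) * 2 = 1 := by
      have h2' : (2 : MvPolynomial (Fin n × Bool) K) = MvPolynomial.C 2 :=
        (map_ofNat (MvPolynomial.C : K →+* MvPolynomial (Fin n × Bool) K) 2).symm
      rw [h2', ← MvPolynomial.C_mul]
      norm_num
    have hFG : ∀ w : MvPolynomial (Fin n × Bool) K, aeval F (aeval G w) = w := by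
      intro w
      have hcomp : (aeval F).comp (aeval G) = AlgHom.id K (MvPolynomial (Fin n × Bool) K) := by
        apply MvPolynomial.algHom_ext
        rintro ⟨i, b⟩
        cases b
        · simp only [AlgHom.coe_comp, Function.comp_apply, AlgHom.coe_id, id_eq,
            MvPolynomial.aeval_X, hG, hF, Bool.false_eq_true, Bool.true_eq_false,
            eq_self_iff_true, if_true, if_false, map_add, map_mul, map_sub,
            MvPolynomial.aeval_C, MvPolynomial.algebraMap_eq]
          linear_combination (MvPolynomial.C (2⁻¹:K) * (MvPolynomial.X ((i, false) : Fin n × Bool)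
            - MvPolynomial.X ((i, true) : Fin n × Bool))) * h1
            + (MvPolynomial.X ((i, false) : Fin n × Bool)) * h2
        · simp only [AlgHom.coe_comp, Function.comp_apply, AlgHom.coe_id, id_eq,
            MvPolynomial.aeval_X, hG, hF, Bool.false_eq_true, Bool.true_eq_false,
            eq_self_iff_true, if_true, if_false, map_add, map_mul, map_sub,
            MvPolynomial.aeval_C, MvPolynomial.algebraMap_eq]
          linear_combination (-(MvPolynomial.C (2⁻¹:K) * (MvPolynomial.X ((i, false) : Fin n × Bool)
            - MvPolynomial.X ((i, true) : Fin n × Bool)))) * h1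
            + (MvPolynomial.X ((i, true) : Fin n × Bool)) * h2
      simpa using DFunLike.congr_fun hcomp w
    obtain ⟨h₀, h₁, hdec⟩ := aux_decomp sd hgen (aeval G g)
    have hg : g = aeval F (aeval G g) := (hFG g).symm
    have hz : ∀ r : Fin n × Bool → ℚ, MvPolynomial.eval r h₁ = 0 := by
      intro r
      set a : Fin n → K := fun i => algebraMap ℚ K (r (i,false)/2)
        + algebraMap ℚ K (r (i,true)/(2*(D:ℚ))) * sd with ha
      have hpoint : ∀ v, MvPolynomial.eval (fun p => if p.2 then τ (a p.1) else a p.1) (F v)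
          = algebraMap ℚ K (r v) := by
        rintro ⟨i, b⟩
        cases b
        · have he : (MvPolynomial.eval (fun p : Fin n × Bool =>
              if p.2 = true then τ (a p.1) else a p.1)) (F (i, false)) = a i + τ (a i) := by
            simp [hF]
          rw [he]
          simp only [ha]
          rw [hval1 (r (i,false)/2) (r (i,true)/(2*(D:ℚ)))]
          congr 1
          ring
        · have he : (MvPolynomial.eval (fun p : Fin n × Bool =>
              if p.2 = true then τ (a p.1) else a p.1)) (F (i, true))
              = sd * (a i - τ (a i)) := by
            simp [hF]
          rw [he]
          simp only [ha]
          rw [hval2 (r (i,false)/2) (r (i,true)/(2*(D:ℚ)))]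
          congr 1
          have hD : ((D:ℤ):ℚ) ≠ 0 := Int.cast_ne_zero.mpr hD0
          field_simp
      have hmem := hvg a
      rw [hg, aux_eval_aevalK] at hmem
      rw [funext hpoint, hdec, map_add, map_mul, MvPolynomial.eval_C,
        aux_eval_map, aux_eval_map] at hmem
      obtain ⟨c, hc⟩ := hmem
      exact (hindep (MvPolynomial.eval r h₀ - c) (MvPolynomial.eval r h₁)
        (by rw [map_sub]; linear_combination -hc)).2
    have h₁0 : h₁ = 0 := MvPolynomial.funext (fun x => by rw [hz x, map_zero])
    refine ⟨h₀, ?_⟩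
    rw [hg, hdec, h₁0, map_zero, mul_zero, add_zero]
    exact (MvPolynomial.aeval_map_algebraMap K F h₀).symm
  · rintro ⟨w, rfl⟩ a
    rw [aux_eval_aevalQ]
    have hmemv : ∀ v, MvPolynomial.eval (fun p => if p.2 then τ (a p.1) else a p.1) (F v)
        ∈ (algebraMap ℚ K).range := by
      rintro ⟨i, b⟩
      obtain ⟨p, q, hpq⟩ := hgen (a i)
      cases b
      · refine ⟨2*p, ?_⟩
        have he : (MvPolynomial.eval (fun p : Fin n × Bool =>
            if p.2 = true then τ (a p.1) else a p.1)) (F (i, false)) = a i + τ (a i) := by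
          simp [hF]
        rw [he, hpq]
        exact (hval1 p q).symm
      · refine ⟨2*q*(D:ℚ), ?_⟩
        have he : (MvPolynomial.eval (fun p : Fin n × Bool =>
            if p.2 = true then τ (a p.1) else a p.1)) (F (i, true))
            = sd * (a i - τ (a i)) := by
          simp [hF]
        rw [he, hpq]
        exact (hval2 p q).symm
    have hbot : aeval (fun v => MvPolynomial.eval
        (fun p => if p.2 then τ (a p.1) else a p.1) (F v)) w ∈ (⊥ : Subalgebra ℚ K) := by
      have hsub : Set.range (fun v => MvPolynomial.eval
          (fun p => if p.2 then τ (a p.1) else a p.1) (F v)) ⊆ (⊥ : Subalgebra ℚ K) := by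
        rintro _ ⟨v, rfl⟩
        rw [SetLike.mem_coe, Algebra.mem_bot]
        obtain ⟨c, hc⟩ := hmemv v
        exact ⟨c, hc⟩
      have hle := Algebra.adjoin_le hsub
      have hmem' : aeval (fun v => MvPolynomial.eval
          (fun p => if p.2 then τ (a p.1) else a p.1) (F v)) w
          ∈ Algebra.adjoin ℚ (Set.range (fun v => MvPolynomial.eval
            (fun p => if p.2 then τ (a p.1) else a p.1) (F v))) := by
        rw [Algebra.adjoin_range_eq_range_aeval]
        exact ⟨w, rfl⟩
      exact hle hmem'
    rw [Algebra.mem_bot] at hbot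
    obtain ⟨c, hc⟩ := hbot
    exact ⟨c, hc⟩
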